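/- Let F ≥ 0 and V be a nonsingular M-matrix with V⁻¹ ≥ 0, with V − F irreducible. If ρ(F V⁻¹) > 1, then every solution v of (V − F) v = 0 is either v = 0 or has a strictly negative component; i.e., there is no solution v ≥ 0, v ≠ 0. -/

import Mathlib

def Matrix.IsReducibleMat {n : ℕ} (A : Matrix (Fin n) (Fin n) ℝ) : Prop :=
  ∃ I J : Set (Fin n), I.Nonempty ∧ J.Nonempty ∧ Disjoint I J ∧ I ∪ J = Set.univ ∧
    ∀ p ∈ I, ∀ q ∈ J, A p q = 0

theorem stmt_14 {n : ℕ} (F V : Matrix (Fin n) (Fin n) ℝ)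
    (hF : ∀ i j, 0 ≤ F i j)
    (hVZ : ∀ p q, p ≠ q → V p q ≤ 0)
    (hVunit : IsUnit V.det)
    (hVinv : ∀ i j, 0 ≤ V⁻¹ i j)
    (hirr : ¬ (V - F).IsReducibleMat)
    (hrho : ∃ μ ∈ spectrum ℂ ((F * V⁻¹).map Complex.ofReal), 1 < ‖μ‖) :
    ∀ v : Fin n → ℝ, (V - F).mulVec v = 0 → v = 0 ∨ ∃ i, v i < 0 := by
  intro v hv
  by_contra hcon
  push_neg at hcon
  obtain ⟨hv0, hvnn⟩ := hcon
  -- Step 1: v is strictly positive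
  have hpos : ∀ i, 0 < v i := by
    by_contra h
    push_neg at h
    obtain ⟨p0, hp0⟩ := h
    have hp0 : v p0 = 0 := le_antisymm hp0 (hvnn p0)
    apply hirr
    refine ⟨{i | v i = 0}, {i | v i ≠ 0}, ⟨p0, hp0⟩, ?_, ?_, ?_, ?_⟩
    · obtain ⟨q, hq⟩ := Function.ne_iff.mp hv0
      exact ⟨q, hq⟩
    · rw [Set.disjoint_left]; intro a ha hb; exact hb ha
    · ext a; simp [em]
    · intro p hp q hq
      have hrow : ∑ j, (V - F) p j * v j = 0 := by
        have := congrFun hv p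
        simpa [Matrix.mulVec, dotProduct] using this
      have hterm : ∀ j ∈ Finset.univ, (V - F) p j * v j ≤ 0 := by
        intro j _
        by_cases hj : v j = 0
        · simp [hj]
        · have hpj : p ≠ j := by
            intro h; rw [h] at hp; exact hj hp
          have h1 : (V - F) p j ≤ 0 := by
            have := hVZ p j hpj; have := hF p j
            simp only [Matrix.sub_apply]; linarith
          exact mul_nonpos_of_nonpos_of_nonneg h1 (hvnn j)
      have hall := (Finset.sum_eq_zero_iff_of_nonpos hterm).mp hrow
      have := hall q (Finset.mem_univ q)
      rcases mul_eq_zero.mp this with h | h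
      · exact h
      · exact absurd h hq
  -- Step 2: V⁻¹ * F has v as eigenvector for eigenvalue 1
  have hVF : V.mulVec v = F.mulVec v := by
    have := hv; rw [Matrix.sub_mulVec, sub_eq_zero] at this; exact this
  have hM : (V⁻¹ * F).mulVec v = v := by
    calc (V⁻¹ * F).mulVec v = V⁻¹.mulVec (F.mulVec v) := by
          rw [Matrix.mulVec_mulVec]
      _ = V⁻¹.mulVec (V.mulVec v) := by rw [hVF]
      _ = (V⁻¹ * V).mulVec v := by rw [Matrix.mulVec_mulVec]
      _ = v := by rw [Matrix.nonsing_inv_mul V hVunit, Matrix.one_mulVec]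
  have hMnn : ∀ i j, 0 ≤ (V⁻¹ * F) i j := by
    intro i j
    rw [Matrix.mul_apply]
    exact Finset.sum_nonneg fun k _ => mul_nonneg (hVinv i k) (hF k j)
  -- Step 3: get eigenvector of (F * V⁻¹) over ℂ
  obtain ⟨μ, hμ, habs⟩ := hrho
  set Aℂ : Matrix (Fin n) (Fin n) ℂ := (F * V⁻¹).map Complex.ofReal with hAdef
  have hdet : (algebraMap ℂ (Matrix (Fin n) (Fin n) ℂ) μ - Aℂ).det = 0 := by
    have h1 := spectrum.mem_iff.mp hμ
    rw [Matrix.isUnit_iff_isUnit_det] at h1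
    exact not_not.mp (fun h => h1 (isUnit_iff_ne_zero.mpr h))
  obtain ⟨u, hu0, hu⟩ := (Matrix.exists_mulVec_eq_zero_iff).mpr hdet
  have hAu : Aℂ.mulVec u = μ • u := by
    have h1 : (algebraMap ℂ (Matrix (Fin n) (Fin n) ℂ) μ).mulVec u - Aℂ.mulVec u = 0 := by
      rw [← Matrix.sub_mulVec]; exact hu
    have h2 : (algebraMap ℂ (Matrix (Fin n) (Fin n) ℂ) μ).mulVec u = μ • u := by
      rw [Algebra.algebraMap_eq_smul_one, Matrix.smul_mulVec, Matrix.one_mulVec]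
    rw [h2] at h1
    exact (sub_eq_zero.mp h1).symm
  -- conjugate to get eigenvector u' of (V⁻¹ * F) over ℂ
  set Vi : Matrix (Fin n) (Fin n) ℂ := V⁻¹.map Complex.ofReal with hVidef
  set u' : Fin n → ℂ := Vi.mulVec u with hu'def
  have hmapmul : ∀ (A B : Matrix (Fin n) (Fin n) ℝ),
      (A * B).map Complex.ofReal = A.map Complex.ofReal * B.map Complex.ofReal := by
    intro A B
    exact A.map_mul (f := Complex.ofRealHom) (M := B)
  have hMu' : ((V⁻¹ * F).map Complex.ofReal).mulVec u' = μ • u' := by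
    calc ((V⁻¹ * F).map Complex.ofReal).mulVec u'
        = (((V⁻¹ * F).map Complex.ofReal) * Vi).mulVec u := by
          rw [hu'def, Matrix.mulVec_mulVec]
      _ = (Vi * Aℂ).mulVec u := by
          rw [hVidef, hAdef, ← hmapmul, ← hmapmul, mul_assoc]
      _ = Vi.mulVec (Aℂ.mulVec u) := by rw [Matrix.mulVec_mulVec]
      _ = Vi.mulVec (μ • u) := by rw [hAu]
      _ = μ • u' := by rw [Matrix.mulVec_smul]
  have hu'0 : u' ≠ 0 := by
    intro h
    apply hu0
    have h1 : (V.map Complex.ofReal).mulVec u' = u := by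
      rw [hu'def, Matrix.mulVec_mulVec, ← hmapmul, Matrix.mul_nonsing_inv V hVunit]
      rw [Matrix.map_one Complex.ofReal Complex.ofReal_zero Complex.ofReal_one]
      exact Matrix.one_mulVec u
    rw [h, Matrix.mulVec_zero] at h1
    exact h1.symm
  -- Step 4: the spectral bound argument
  set M : Matrix (Fin n) (Fin n) ℝ := V⁻¹ * F with hMdef
  set g : Fin n → ℝ := fun i => ‖u' i‖ / v i with hgdef
  have hne : (Finset.univ : Finset (Fin n)).Nonempty := by
    obtain ⟨j, hj⟩ := Function.ne_iff.mp hu'0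
    exact ⟨j, Finset.mem_univ j⟩
  obtain ⟨i₀, -, hi₀⟩ := Finset.exists_max_image Finset.univ g hne
  set c : ℝ := g i₀ with hcdef
  have hbound : ∀ j, ‖u' j‖ ≤ c * v j := by
    intro j
    have := hi₀ j (Finset.mem_univ j)
    rwa [hgdef, div_le_iff₀ (hpos j)] at this
  have hcpos : 0 < c := by
    obtain ⟨j, hj⟩ := Function.ne_iff.mp hu'0
    have h1 : 0 < g j := div_pos (by simpa using (norm_pos_iff.mpr (by simpa using hj))) (hpos j)
    exact lt_of_lt_of_le h1 (hi₀ j (Finset.mem_univ j))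
  have heq : c * v i₀ = ‖u' i₀‖ := div_mul_cancel₀ _ (hpos i₀).ne'
  have hkey : ‖μ‖ * (c * v i₀) ≤ c * v i₀ := by
    have h1 : ‖(μ • u') i₀‖ = ‖μ‖ * (c * v i₀) := by
      simp [Pi.smul_apply, map_mul, ← heq]
    have h2 : (μ • u') i₀ = (((V⁻¹ * F).map Complex.ofReal).mulVec u') i₀ := by
      rw [hMu']
    have h3 : ‖(((V⁻¹ * F).map Complex.ofReal).mulVec u') i₀‖ ≤ c * v i₀ := by
      have e1 : (((V⁻¹ * F).map Complex.ofReal).mulVec u') i₀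
          = ∑ j, Complex.ofReal ((V⁻¹ * F) i₀ j) * u' j := by
        simp [Matrix.mulVec, dotProduct, Matrix.map_apply]
      rw [e1]
      calc ‖∑ j, Complex.ofReal ((V⁻¹ * F) i₀ j) * u' j‖
          ≤ ∑ j, ‖Complex.ofReal ((V⁻¹ * F) i₀ j) * u' j‖ :=
            norm_sum_le _ _
        _ = ∑ j, (V⁻¹ * F) i₀ j * ‖u' j‖ := by
            refine Finset.sum_congr rfl fun j _ => ?_
            rw [norm_mul, Complex.norm_real, Real.norm_eq_abs, abs_of_nonneg (hMnn i₀ j)]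
        _ ≤ ∑ j, (V⁻¹ * F) i₀ j * (c * v j) := by
            refine Finset.sum_le_sum fun j _ => ?_
            exact mul_le_mul_of_nonneg_left (hbound j) (hMnn i₀ j)
        _ = c * ∑ j, (V⁻¹ * F) i₀ j * v j := by
            rw [Finset.mul_sum]; exact Finset.sum_congr rfl fun j _ => by ring
        _ = c * v i₀ := by
            have : ∑ j, (V⁻¹ * F) i₀ j * v j = ((V⁻¹ * F).mulVec v) i₀ := by
              simp [Matrix.mulVec, dotProduct]
            rw [this, hM]
    rw [← h1, h2] at *
    exact h3
  have hcv : 0 < c * v i₀ := mul_pos hcpos (hpos i₀)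
  have : ‖μ‖ ≤ 1 := (mul_le_iff_le_one_left hcv).mp hkey
  linarith
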